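/- Under the SPS setup, suppose additionally that ρ_k ≤ ρ̄ < 1/L for all k. Then for every p* = (z*, w_1*, …, w_{n+1}*) ∈ S and every k, almost surely E[ ⟨z^k − x_{n+1}^k, y_{n+1}^k − w_{n+1}^k⟩ − ⟨z* − x_{n+1}^k, y_{n+1}^k − w_{n+1}*⟩ | 𝔉_k ] ≥ ρ_k(1 − ρ̄L) ‖B(z^k) − w_{n+1}^k‖² − 2ρ_k² N L³ ‖p^k − p*‖² − ρ_k² N L (1 + 2‖B(z*)‖²). -/

import Mathlib

open MeasureTheory Filter
open scoped RealInnerProductSpace BigOperators NNReal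

noncomputable section

/-- `Ed d` is Euclidean space `ℝ^d`. -/
abbrev Ed (d : ℕ) := EuclideanSpace ℝ (Fin d)

/-- A set-valued operator `A : ℝ^d → Set (ℝ^d)` is monotone. -/
def IsMonotoneOp {d : ℕ} (A : Ed d → Set (Ed d)) : Prop :=
  ∀ ⦃x y u v : Ed d⦄, u ∈ A x → v ∈ A y → 0 ≤ ⟪u - v, x - y⟫

/-- A set-valued operator is maximal monotone: monotone and its graph admits
no proper monotone extension. -/
def IsMaximalMonotoneOp {d : ℕ} (A : Ed d → Set (Ed d)) : Prop :=
  IsMonotoneOp A ∧ ∀ A' : Ed d → Set (Ed d), IsMonotoneOp A' → (∀ u, A u ⊆ A' u) → A' = A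

/-- The extended solution set `S` of `0 ∈ ∑ᵢ Aᵢ(z) + B(z)`. -/
def extSolSet {d n : ℕ} (A : Fin n → Ed d → Set (Ed d)) (B : Ed d → Ed d) :
    Set (Ed d × (Fin (n + 1) → Ed d)) :=
  {p | (∀ i : Fin n, p.2 i.castSucc ∈ A i p.1) ∧ p.2 (Fin.last n) = B p.1 ∧ ∑ i, p.2 i = 0}

/-- Squared Euclidean distance `‖p - q‖²` in the product space `ℝ^{(n+2)d}`, for
`p = (z, w₁, …, w_{n+1})` and `q`. -/
def pDistSq {d n : ℕ} (z : Ed d) (w : Fin (n + 1) → Ed d)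
    (q : Ed d × (Fin (n + 1) → Ed d)) : ℝ :=
  ‖z - q.1‖ ^ 2 + ∑ i, ‖w i - q.2 i‖ ^ 2

/-- The σ-algebra `𝔉_k = σ(p¹, …, p^k)` generated by the first `k` SPS iterates. -/
def spsSigma {d n : ℕ} {Ω : Type} [MeasurableSpace Ω]
    (z : ℕ → Ω → Ed d) (w : ℕ → Fin (n + 1) → Ω → Ed d) (k : ℕ) : MeasurableSpace Ω :=
  ⨆ j ∈ Set.Icc 1 k,
    MeasurableSpace.comap (fun ω => (z j ω, fun i => w j i ω)) inferInstance

/-- The constant `C₁`. -/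
def spsC1 (n : ℕ) (τ L N ρb : ℝ) : ℝ :=
  24 * (1 + 10 * ρb ^ 2) * ((n : ℝ) + 1) * (L ^ 2 + 1) ^ 2 * (N + 1) ^ 2
    + 8 * ((n : ℝ) + 1) * (2 * τ ^ 2 + 6 * ((n : ℝ) + 1) + 1 + 3 * ((n : ℝ) + 1) ^ 2 / τ ^ 2)

/-- The constant `C₂`; here `Bz = B(z*)` and `sw = ∑_{i=1}^n wᵢ*`. -/
def spsC2 {d : ℕ} (n : ℕ) (L N ρb : ℝ) (Bz sw : Ed d) : ℝ :=
  16 * (N + 1) * (1 + 4 * ρb ^ 2 * ((n : ℝ) + 1) + 9 * ρb ^ 2 * L ^ 2 * (N + 1)) * ‖Bz‖ ^ 2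
    + 8 * ‖sw‖ ^ 2 + 12 * ρb ^ 2 * N * (2 * L ^ 2 * (N + 1) + (n : ℝ) + 1) + 4 * N

/-- The constant `C₃`. -/
def spsC3 (L N : ℝ) : ℝ := 4 * N * L ^ 3

/-- The constant `C₄`; here `Bz = B(z*)`. -/
def spsC4 {d : ℕ} (L N : ℝ) (Bz : Ed d) : ℝ := 2 * N * L * (1 + 2 * ‖Bz‖ ^ 2)

lemma sps_integrable_inner {Ω E : Type*} [MeasurableSpace Ω] {P : Measure Ω}
    [NormedAddCommGroup E] [InnerProductSpace ℝ E]
    {f g : Ω → E} (hf : MemLp f 2 P) (hg : MemLp g 2 P) :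
    Integrable (fun ω => (⟪f ω, g ω⟫ : ℝ)) P := by
  have h1 : Integrable (fun ω => ‖f ω‖^2) P := (memLp_two_iff_integrable_sq_norm hf.1).1 hf
  have h2 : Integrable (fun ω => ‖g ω‖^2) P := (memLp_two_iff_integrable_sq_norm hg.1).1 hg
  refine ((h1.add h2).const_mul (1/2 : ℝ)).mono' (hf.1.inner hg.1) ?_
  filter_upwards with ω
  have h := abs_real_inner_le_norm (f ω) (g ω)
  have h' := sq_nonneg (‖f ω‖ - ‖g ω‖)
  simp only [Pi.add_apply, Real.norm_eq_abs]
  nlinarith [norm_nonneg (f ω), norm_nonneg (g ω)]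

lemma sps_condexp_clm {Ω : Type*} {m m0 : MeasurableSpace Ω} (hm : m ≤ m0)
    {P : Measure Ω} [IsFiniteMeasure P] {d : ℕ}
    (T : Ed d →L[ℝ] ℝ) {f : Ω → Ed d} (hf : Integrable f P) :
    (fun ω => T ((P[f|m]) ω)) =ᵐ[P] P[fun ω => T (f ω)|m] := by
  refine ae_eq_condExp_of_forall_setIntegral_eq hm (T.integrable_comp hf)
    (fun s hs hμs => (T.integrable_comp integrable_condExp).integrableOn)
    (fun s hs hμs => ?_)
    ((T.continuous.comp_stronglyMeasurable stronglyMeasurable_condExp).aestronglyMeasurable)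
  rw [T.integral_comp_comm integrable_condExp.integrableOn,
    setIntegral_condExp hm hf hs, ← T.integral_comp_comm hf.integrableOn]

lemma sps_condexp_inner_zero {Ω : Type*} {m m0 : MeasurableSpace Ω} (hm : m ≤ m0)
    {P : Measure Ω} [IsProbabilityMeasure P] {d : ℕ} {f g : Ω → Ed d}
    (hfm : StronglyMeasurable[m] f) (hf : MemLp f 2 P) (hg : MemLp g 2 P)
    (hg0 : P[g|m] =ᵐ[P] 0) :
    P[fun ω => ⟪f ω, g ω⟫|m] =ᵐ[P] 0 := by
  have hgi : Integrable g P := hg.integrable one_le_two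
  have hgi0 : ∀ i : Fin d, P[fun ω => g ω i|m] =ᵐ[P] 0 := by
    intro i
    refine (sps_condexp_clm hm (EuclideanSpace.proj i) hgi).symm.trans ?_
    filter_upwards [hg0] with ω hω
    simp only [hω, Pi.zero_apply, map_zero]
  have hcomp : ∀ (h : Ω → Ed d), MemLp h 2 P → ∀ i : Fin d,
      MemLp (fun ω => h ω i) 2 P := by
    intro h hh i
    exact (EuclideanSpace.proj (𝕜 := ℝ) i).comp_memLp' hh
  have hint : ∀ i : Fin d, Integrable (fun ω => f ω i * g ω i) P := by
    intro i
    have := sps_integrable_inner (E := ℝ) (hcomp f hf i) (hcomp g hg i)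
    simpa [RCLike.inner_apply, conj_trivial, mul_comm] using this
  have hrw : (fun ω => (⟪f ω, g ω⟫ : ℝ)) = ∑ i : Fin d, fun ω => f ω i * g ω i := by
    funext ω
    rw [Finset.sum_apply]
    simp [PiLp.inner_apply, RCLike.inner_apply, conj_trivial]
    exact Finset.sum_congr rfl fun i _ => mul_comm _ _
  rw [hrw]
  refine (condExp_finsetSum (fun i _ => hint i) m).trans ?_
  have hterm : ∀ i : Fin d, P[fun ω => f ω i * g ω i|m] =ᵐ[P] 0 := by
    intro i
    have hfmi : StronglyMeasurable[m] (fun ω => f ω i) :=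
      (EuclideanSpace.proj (𝕜 := ℝ) i).continuous.comp_stronglyMeasurable hfm
    have heq := condExp_mul_of_stronglyMeasurable_left hfmi
      (by simpa [Pi.mul_def] using hint i) ((hcomp g hg i).integrable one_le_two)
    have hre : (fun ω => f ω i * g ω i) = (fun ω => f ω i) * (fun ω => g ω i) := rfl
    rw [hre]
    refine heq.trans ?_
    filter_upwards [hgi0 i] with ω hω
    simp only [Pi.zero_apply] at hω
    simp only [Pi.mul_apply, hω, mul_zero, Pi.zero_apply]
  have hall := Filter.eventually_all.2 hterm
  filter_upwards [hall] with ω hω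
  rw [Finset.sum_apply]
  simp only [Pi.zero_apply] at hω ⊢
  exact Finset.sum_eq_zero fun i _ => hω i

lemma gap_ge {d : ℕ} {ρk L : ℝ} (hρ : 0 < ρk) (hL : 0 < L) {B : Ed d → Ed d}
    (hBmono : ∀ u v : Ed d, 0 ≤ ⟪B u - B v, u - v⟫)
    (hBlip : ∀ u v : Ed d, ‖B u - B v‖ ≤ L * ‖u - v‖)
    (zz zs ww a ee xx : Ed d) (hxx : xx = zz - ρk • (B zz + a - ww)) :
    (ρk - ρk^2*L) * ‖B zz - ww‖^2 + (ρk - 2*(ρk^2)*L) * ⟪B zz - ww, a⟫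
      + (-(ρk^2*L)) * ‖a‖^2 + ⟪zz - zs, ee⟫
    ≤ ⟪zz - xx, (B xx + ee) - ww⟫ - ⟪zs - xx, (B xx + ee) - B zs⟫ := by
  have hmono := hBmono xx zs
  have hlip := hBlip xx zz
  set c : Ed d := B zz - ww with hc
  set u : Ed d := c + a with hu
  set bx : Ed d := B xx with hbx
  have hx' : xx = zz - ρk • u := by
    rw [hxx, hu, hc]; congr 1; module
  have hCS : |⟪u, bx - B zz⟫| ≤ ‖u‖ * ‖bx - B zz‖ := abs_real_inner_le_norm _ _
  have hnxz : ‖xx - zz‖ = ρk * ‖u‖ := by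
    rw [hx']
    have : zz - ρk • u - zz = -(ρk • u) := by abel
    rw [this, norm_neg, norm_smul, Real.norm_eq_abs, abs_of_pos hρ]
  have hid : ⟪zz - xx, (bx + ee) - ww⟫ - ⟪zs - xx, (bx + ee) - B zs⟫
      = ρk * ⟪u, bx - B zz⟫ + ρk * ⟪u, c⟫ + ⟪bx - B zs, xx - zs⟫ + ⟪zz - zs, ee⟫ := by
    rw [hx', hu, hc]
    simp only [inner_sub_left, inner_sub_right, inner_add_left, inner_add_right,
      real_inner_smul_left, real_inner_smul_right]
    simp only [real_inner_comm]
    ring_nf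
  rw [hid]
  have h2 : ‖u‖^2 = ‖c‖^2 + 2*⟪c,a⟫ + ‖a‖^2 := by rw [hu]; exact norm_add_sq_real c a
  have h3 : ⟪u, c⟫ = ‖c‖^2 + ⟪c, a⟫ := by
    rw [hu, inner_add_left, real_inner_self_eq_norm_sq, real_inner_comm]
  have h1 : -(ρk^2 * L * ‖u‖^2) ≤ ρk * ⟪u, bx - B zz⟫ := by
    have hb : ‖bx - B zz‖ ≤ L * (ρk * ‖u‖) := by rw [← hnxz]; exact hlip
    have e1 : -(‖u‖ * ‖bx - B zz‖) ≤ ⟪u, bx - B zz⟫ := neg_le_of_abs_le hCS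
    have e2 : ‖u‖ * ‖bx - B zz‖ ≤ ρk * L * ‖u‖^2 := by
      nlinarith [mul_le_mul_of_nonneg_left hb (norm_nonneg u)]
    nlinarith [mul_le_mul_of_nonneg_left (le_trans (by linarith) e1 :
      -(ρk * L * ‖u‖^2) ≤ ⟪u, bx - B zz⟫) hρ.le]
  have h2' : ρk^2*L*‖u‖^2 = ρk^2*L*(‖c‖^2 + 2*⟪c,a⟫ + ‖a‖^2) := by rw [h2]
  have h3' : ρk * ⟪u, c⟫ = ρk*‖c‖^2 + ρk*⟪c,a⟫ := by rw [h3]; ring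
  linarith

lemma sps_memLp_B {Ω : Type*} [MeasurableSpace Ω] {P : Measure Ω} [IsFiniteMeasure P]
    {d : ℕ} {B : Ed d → Ed d} {L : ℝ} (hL : 0 < L)
    (hBlip : ∀ u v : Ed d, ‖B u - B v‖ ≤ L * ‖u - v‖)
    {f : Ω → Ed d} (hfm : Measurable f) (hf : MemLp f 2 P) :
    MemLp (fun ω => B (f ω)) 2 P := by
  have hBcont : Continuous B := by
    have hlip : LipschitzWith (Real.toNNReal L) B := by
      refine LipschitzWith.of_dist_le_mul fun u v => ?_
      rw [dist_eq_norm, dist_eq_norm]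
      calc ‖B u - B v‖ ≤ L * ‖u - v‖ := hBlip u v
        _ = (Real.toNNReal L : ℝ) * ‖u - v‖ := by rw [Real.coe_toNNReal L hL.le]
    exact hlip.continuous
  have hdom : MemLp (fun ω => ‖B 0‖ + L * ‖f ω‖) 2 P :=
    (memLp_const (μ := P) (p := 2) (‖B 0‖)).add (hf.norm.const_mul L)
  refine hdom.of_le
    ((hBcont.comp_stronglyMeasurable hfm.stronglyMeasurable).aestronglyMeasurable) ?_
  filter_upwards with ω
  have h1 : ‖B (f ω) - B 0‖ ≤ L * ‖f ω - 0‖ := hBlip _ _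
  rw [sub_zero] at h1
  have h2 : ‖B (f ω)‖ ≤ ‖B (f ω) - B 0‖ + ‖B 0‖ := by
    calc ‖B (f ω)‖ = ‖(B (f ω) - B 0) + B 0‖ := by rw [sub_add_cancel]
      _ ≤ ‖B (f ω) - B 0‖ + ‖B 0‖ := norm_add_le _ _
  rw [Real.norm_eq_abs]
  have h3 : ‖B 0‖ + L * ‖f ω‖ ≤ |‖B 0‖ + L * ‖f ω‖| := le_abs_self _
  linarith


lemma sps_arith {ρk ρb L N q D V s b bs : ℝ} (hρk : 0 < ρk) (hρkb : ρk ≤ ρb) (hL : 0 < L)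
    (hN : 0 ≤ N) (hq : 0 ≤ q) (hs : 0 ≤ s) (hb : 0 ≤ b) (hbs : 0 ≤ bs)
    (hsD : s ^ 2 ≤ D) (hbb : b ≤ bs + L * s) (hV : V ≤ N + N * b ^ 2) :
    ρk * (1 - ρb * L) * q - 2 * ρk ^ 2 * N * L ^ 3 * D - ρk ^ 2 * N * L * (1 + 2 * bs ^ 2)
      ≤ (ρk - ρk ^ 2 * L) * q + -(ρk ^ 2 * L) * V := by
  have hb2 : b ^ 2 ≤ 2 * bs ^ 2 + 2 * L ^ 2 * D := by
    have hbs2 := mul_self_le_mul_self hb hbb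
    have hLs := mul_le_mul_of_nonneg_left hsD (by positivity : (0:ℝ) ≤ 2 * L ^ 2)
    nlinarith [sq_nonneg (bs - L * s)]
  have hstep1 : ρk * (1 - ρb * L) * q ≤ (ρk - ρk ^ 2 * L) * q := by
    have hcoef : ρk * (1 - ρb * L) ≤ ρk - ρk ^ 2 * L := by
      nlinarith [mul_nonneg (mul_nonneg hρk.le hL.le) (sub_nonneg.2 hρkb)]
    exact mul_le_mul_of_nonneg_right hcoef hq
  have hstep2 : ρk ^ 2 * L * (N + N * b ^ 2)
      ≤ 2 * ρk ^ 2 * N * L ^ 3 * D + ρk ^ 2 * N * L * (1 + 2 * bs ^ 2) := by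
    have := mul_le_mul_of_nonneg_left hb2 (by positivity : (0:ℝ) ≤ ρk ^ 2 * L * N)
    nlinarith
  have hstep3 : -(ρk ^ 2 * L * (N + N * b ^ 2)) ≤ -(ρk ^ 2 * L) * V := by
    have := mul_le_mul_of_nonneg_left hV (by positivity : (0:ℝ) ≤ ρk ^ 2 * L)
    linarith
  linarith

/-- conditional lower bound on the `φ_{n+1,k}`-gap. -/
theorem sps_last_gap_lower_bound
    {d n : ℕ} (hd : 1 ≤ d) (hn : 1 ≤ n)
    (τ : ℝ) (hτ : 0 < τ)
    (α ρ : ℕ → ℝ) (hα : ∀ k, 1 ≤ k → 0 < α k) (hρ : ∀ k, 1 ≤ k → 0 < ρ k)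
    (A : Fin n → Ed d → Set (Ed d)) (hA : ∀ i, IsMaximalMonotoneOp (A i))
    (B : Ed d → Ed d) (L : ℝ) (hL : 0 < L)
    (hBmono : ∀ u v : Ed d, 0 ≤ ⟪B u - B v, u - v⟫)
    (hBlip : ∀ u v : Ed d, ‖B u - B v‖ ≤ L * ‖u - v‖)
    (hS : (extSolSet A B).Nonempty)
    {Ω : Type} [MeasurableSpace Ω] (P : Measure Ω) [IsProbabilityMeasure P]
    (z : ℕ → Ω → Ed d) (w x y : ℕ → Fin (n + 1) → Ω → Ed d) (ε e : ℕ → Ω → Ed d)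
    (hzm : ∀ k, Measurable (z k)) (hwm : ∀ k i, Measurable (w k i))
    (hxm : ∀ k i, Measurable (x k i)) (hym : ∀ k i, Measurable (y k i))
    (hεm : ∀ k, Measurable (ε k)) (hem : ∀ k, Measurable (e k))
    (hw1 : ∀ ω, ∑ i, w 1 i ω = 0)
    (hyd : ∀ k, 1 ≤ k → ∀ (i : Fin n) (ω : Ω),
      y k i.castSucc ω = τ⁻¹ • (z k ω + τ • w k i.castSucc ω - x k i.castSucc ω))
    (hyres : ∀ k, 1 ≤ k → ∀ (i : Fin n) (ω : Ω), y k i.castSucc ω ∈ A i (x k i.castSucc ω))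
    (hxl : ∀ k, 1 ≤ k → ∀ ω : Ω,
      x k (Fin.last n) ω = z k ω - ρ k • (B (z k ω) + ε k ω - w k (Fin.last n) ω))
    (hyl : ∀ k, 1 ≤ k → ∀ ω : Ω, y k (Fin.last n) ω = B (x k (Fin.last n) ω) + e k ω)
    (hzu : ∀ k, 1 ≤ k → ∀ ω : Ω, z (k + 1) ω = z k ω - α k • ∑ i, y k i ω)
    (hwu : ∀ k, 1 ≤ k → ∀ (i : Fin (n + 1)) (ω : Ω),
      w (k + 1) i ω = w k i ω - α k • (x k i ω - ((n : ℝ) + 1)⁻¹ • ∑ j, x k j ω))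
    (N : ℝ) (hN : 0 ≤ N)
    (hεL2 : ∀ k, 1 ≤ k → MemLp (ε k) 2 P) (heL2 : ∀ k, 1 ≤ k → MemLp (e k) 2 P)
    (hzL2 : ∀ k, 1 ≤ k → MemLp (z k) 2 P) (hwL2 : ∀ k, 1 ≤ k → ∀ i, MemLp (w k i) 2 P)
    (hε0 : ∀ k, 1 ≤ k → ∀ᵐ ω ∂P, (P[ε k | spsSigma z w k]) ω = 0)
    (he0 : ∀ k, 1 ≤ k → ∀ᵐ ω ∂P, (P[e k | spsSigma z w k]) ω = 0)
    (hεv : ∀ k, 1 ≤ k → ∀ᵐ ω ∂P,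
      (P[fun ω' => ‖ε k ω'‖ ^ 2 | spsSigma z w k]) ω ≤ N + N * ‖B (z k ω)‖ ^ 2)
    (hev : ∀ k, 1 ≤ k → ∀ᵐ ω ∂P,
      (P[fun ω' => ‖e k ω'‖ ^ 2 |
          spsSigma z w k ⊔ MeasurableSpace.comap (ε k) inferInstance]) ω
        ≤ N + N * ‖B (x k (Fin.last n) ω)‖ ^ 2)
    (ρb : ℝ) (hρb : ∀ k, 1 ≤ k → ρ k ≤ ρb) (hρbL : ρb < 1 / L) :
    ∀ ps ∈ extSolSet A B, ∀ k, 1 ≤ k → ∀ᵐ ω ∂P,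
      ρ k * (1 - ρb * L) * ‖B (z k ω) - w k (Fin.last n) ω‖ ^ 2
        - 2 * (ρ k) ^ 2 * N * L ^ 3 * pDistSq (z k ω) (fun i => w k i ω) ps
        - (ρ k) ^ 2 * N * L * (1 + 2 * ‖B ps.1‖ ^ 2)
      ≤ (P[fun ω' =>
            ⟪z k ω' - x k (Fin.last n) ω', y k (Fin.last n) ω' - w k (Fin.last n) ω'⟫
            - ⟪ps.1 - x k (Fin.last n) ω', y k (Fin.last n) ω' - ps.2 (Fin.last n)⟫ |
          spsSigma z w k]) ω := by
  intro ps hps k hk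
  obtain ⟨hpsA, hpslast, hpssum⟩ := hps
  have hεv' := hεv k hk
  have hε0' := hε0 k hk
  have he0' := he0 k hk
  have hρk : 0 < ρ k := hρ k hk
  have hρkb : ρ k ≤ ρb := hρb k hk
  -- the sub-σ-algebra
  have hm : spsSigma z w k ≤ ‹MeasurableSpace Ω› := by
    unfold spsSigma
    refine iSup_le fun j => iSup_le fun hj => ?_
    exact measurable_iff_comap_le.mp
      ((hzm j).prodMk (measurable_pi_lambda _ fun i => hwm j i))
  haveI : SigmaFinite (P.trim hm) := (isFiniteMeasure_trim hm).toSigmaFinite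
  -- z k, w k i are m-measurable
  have hFm : Measurable[MeasurableSpace.comap
      (fun ω => (z k ω, fun i => w k i ω)) inferInstance]
      (fun ω => (z k ω, fun i => w k i ω)) := measurable_iff_comap_le.mpr le_rfl
  have hle : MeasurableSpace.comap (fun ω => (z k ω, fun i => w k i ω)) inferInstance
      ≤ spsSigma z w k := by
    unfold spsSigma
    exact le_biSup
      (fun j => MeasurableSpace.comap (fun ω => (z j ω, fun i => w j i ω)) inferInstance)
      (Set.mem_Icc.mpr ⟨hk, le_rfl⟩)
  have hzkm : Measurable[spsSigma z w k] (z k) := (measurable_fst.comp hFm).mono hle le_rfl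
  have hwkm : ∀ i, Measurable[spsSigma z w k] (w k i) := fun i =>
    ((measurable_pi_apply i).comp (measurable_snd.comp hFm)).mono hle le_rfl
  have hzS : StronglyMeasurable[spsSigma z w k] (z k) := hzkm.stronglyMeasurable
  have hwS : StronglyMeasurable[spsSigma z w k] (w k (Fin.last n)) := (hwkm _).stronglyMeasurable
  have hBcont : Continuous B := by
    have hlip : LipschitzWith (Real.toNNReal L) B := by
      refine LipschitzWith.of_dist_le_mul fun u v => ?_
      rw [dist_eq_norm, dist_eq_norm]
      calc ‖B u - B v‖ ≤ L * ‖u - v‖ := hBlip u v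
        _ = (Real.toNNReal L : ℝ) * ‖u - v‖ := by rw [Real.coe_toNNReal L hL.le]
    exact hlip.continuous
  have hcS : StronglyMeasurable[spsSigma z w k] (fun ω => B (z k ω) - w k (Fin.last n) ω) :=
    (hBcont.comp_stronglyMeasurable hzS).sub hwS
  -- MemLp facts
  have hz2 := hzL2 k hk
  have hw2 := hwL2 k hk (Fin.last n)
  have hε2 := hεL2 k hk
  have he2 := heL2 k hk
  have hBz2 : MemLp (fun ω => B (z k ω)) 2 P := sps_memLp_B hL hBlip (hzm k) hz2
  have hc2 : MemLp (fun ω => B (z k ω) - w k (Fin.last n) ω) 2 P := hBz2.sub hw2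
  have hx2 : MemLp (x k (Fin.last n)) 2 P := by
    have h0 : MemLp ((z k) - ρ k • (((fun ω => B (z k ω)) + ε k) - w k (Fin.last n))) 2 P :=
      hz2.sub (((hBz2.add hε2).sub hw2).const_smul (ρ k))
    refine MemLp.ae_eq (Filter.Eventually.of_forall fun ω => ?_) h0
    simp only [Pi.sub_apply, Pi.add_apply, Pi.smul_apply]
    exact (hxl k hk ω).symm
  have hBx2 : MemLp (fun ω => B (x k (Fin.last n) ω)) 2 P :=
    sps_memLp_B hL hBlip (hxm k _) hx2
  have hy2 : MemLp (y k (Fin.last n)) 2 P := by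
    have h0 : MemLp ((fun ω => B (x k (Fin.last n) ω)) + e k) 2 P := hBx2.add he2
    refine MemLp.ae_eq (Filter.Eventually.of_forall fun ω => ?_) h0
    simp only [Pi.add_apply]
    exact (hyl k hk ω).symm
  -- integrability of the gap function
  have hzx2 : MemLp (fun ω => z k ω - x k (Fin.last n) ω) 2 P := hz2.sub hx2
  have hyw2 : MemLp (fun ω => y k (Fin.last n) ω - w k (Fin.last n) ω) 2 P := hy2.sub hw2
  have hsx2 : MemLp (fun ω => ps.1 - x k (Fin.last n) ω) 2 P := (memLp_const ps.1).sub hx2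
  have hys2 : MemLp (fun ω => y k (Fin.last n) ω - ps.2 (Fin.last n)) 2 P :=
    hy2.sub (memLp_const _)
  have hGint : Integrable (fun ω' =>
      ⟪z k ω' - x k (Fin.last n) ω', y k (Fin.last n) ω' - w k (Fin.last n) ω'⟫
        - ⟪ps.1 - x k (Fin.last n) ω', y k (Fin.last n) ω' - ps.2 (Fin.last n)⟫) P :=
    (sps_integrable_inner hzx2 hyw2).sub (sps_integrable_inner hsx2 hys2)
  -- the four pieces of the lower-bounding function
  have hi1 : Integrable (fun ω => ‖B (z k ω) - w k (Fin.last n) ω‖ ^ 2) P :=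
    (memLp_two_iff_integrable_sq_norm hc2.1).1 hc2
  have hi2 : Integrable (fun ω => ⟪B (z k ω) - w k (Fin.last n) ω, ε k ω⟫) P :=
    sps_integrable_inner hc2 hε2
  have hi3 : Integrable (fun ω' => ‖ε k ω'‖ ^ 2) P :=
    (memLp_two_iff_integrable_sq_norm hε2.1).1 hε2
  have hzs2 : MemLp (fun ω => z k ω - ps.1) 2 P := hz2.sub (memLp_const _)
  have hi4 : Integrable (fun ω => ⟪z k ω - ps.1, e k ω⟫) P := sps_integrable_inner hzs2 he2
  have hi1s : Integrable ((ρ k - ρ k ^ 2 * L) •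
      (fun ω => ‖B (z k ω) - w k (Fin.last n) ω‖ ^ 2)) P := hi1.smul _
  have hi2s : Integrable ((ρ k - 2 * ρ k ^ 2 * L) •
      (fun ω => ⟪B (z k ω) - w k (Fin.last n) ω, ε k ω⟫)) P := hi2.smul _
  have hi3s : Integrable ((-(ρ k ^ 2 * L)) • (fun ω' => ‖ε k ω'‖ ^ 2)) P := hi3.smul _
  have hi12 : Integrable ((ρ k - ρ k ^ 2 * L) •
      (fun ω => ‖B (z k ω) - w k (Fin.last n) ω‖ ^ 2)
      + (ρ k - 2 * ρ k ^ 2 * L) •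
      (fun ω => ⟪B (z k ω) - w k (Fin.last n) ω, ε k ω⟫)) P := hi1s.add hi2s
  have hi123 := hi12.add hi3s
  have hHint := hi123.add hi4
  -- pointwise lower bound
  have hle_ae : ((ρ k - ρ k ^ 2 * L) •
        (fun ω => ‖B (z k ω) - w k (Fin.last n) ω‖ ^ 2)
      + (ρ k - 2 * ρ k ^ 2 * L) •
        (fun ω => ⟪B (z k ω) - w k (Fin.last n) ω, ε k ω⟫)
      + (-(ρ k ^ 2 * L)) • (fun ω' => ‖ε k ω'‖ ^ 2)
      + fun ω => ⟪z k ω - ps.1, e k ω⟫)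
      ≤ᵐ[P] (fun ω' =>
      ⟪z k ω' - x k (Fin.last n) ω', y k (Fin.last n) ω' - w k (Fin.last n) ω'⟫
        - ⟪ps.1 - x k (Fin.last n) ω', y k (Fin.last n) ω' - ps.2 (Fin.last n)⟫) := by
    refine Filter.Eventually.of_forall fun ω => ?_
    simp only [Pi.add_apply, Pi.smul_apply, smul_eq_mul]
    rw [hyl k hk ω, hpslast]
    exact gap_ge hρk hL hBmono hBlip (z k ω) ps.1 (w k (Fin.last n) ω) (ε k ω) (e k ω)
      (x k (Fin.last n) ω) (hxl k hk ω)
  have hmono_ce := condExp_mono (m := spsSigma z w k) hHint hGint hle_ae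
  -- conditional expectations of the pieces
  have e1 : P[fun ω => ‖B (z k ω) - w k (Fin.last n) ω‖ ^ 2|spsSigma z w k]
      = fun ω => ‖B (z k ω) - w k (Fin.last n) ω‖ ^ 2 := by
    refine condExp_of_stronglyMeasurable hm ?_ hi1
    exact (continuous_pow 2).comp_stronglyMeasurable hcS.norm
  have hε0'' : P[ε k|spsSigma z w k] =ᵐ[P] 0 := by
    filter_upwards [hε0'] with ω h using by simpa using h
  have he0'' : P[e k|spsSigma z w k] =ᵐ[P] 0 := by
    filter_upwards [he0'] with ω h using by simpa using h
  have e2 : P[fun ω => ⟪B (z k ω) - w k (Fin.last n) ω, ε k ω⟫|spsSigma z w k] =ᵐ[P] 0 :=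
    sps_condexp_inner_zero hm hcS hc2 hε2 hε0''
  have e4 : P[fun ω => ⟪z k ω - ps.1, e k ω⟫|spsSigma z w k] =ᵐ[P] 0 :=
    sps_condexp_inner_zero hm (hzS.sub stronglyMeasurable_const) hzs2 he2 he0''
  -- splitting the conditional expectation
  have hsplit := (condExp_add (m := spsSigma z w k) hi123 hi4).trans
    (((condExp_add (m := spsSigma z w k) hi12 hi3s).trans
      (((condExp_add (m := spsSigma z w k) hi1s hi2s).trans
        ((condExp_smul (m := spsSigma z w k) _ _).add (condExp_smul (m := spsSigma z w k) _ _))).add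
        (condExp_smul (m := spsSigma z w k) _ _))).add EventuallyEq.rfl)
  -- put everything together
  filter_upwards [hmono_ce, hsplit, e2, e4, hεv'] with ω hge hsp h2z h4z hv
  simp only [Pi.add_apply, Pi.smul_apply, smul_eq_mul, Pi.zero_apply] at hsp h2z h4z
  refine le_trans ?_ hge
  rw [hsp, e1, h2z, h4z, mul_zero, add_zero, add_zero]
  have hsD : ‖z k ω - ps.1‖ ^ 2 ≤ pDistSq (z k ω) (fun i => w k i ω) ps := by
    simp only [pDistSq]
    have h0 : 0 ≤ ∑ i, ‖w k i ω - ps.2 i‖ ^ 2 :=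
      Finset.sum_nonneg fun i _ => sq_nonneg _
    linarith
  have hbb : ‖B (z k ω)‖ ≤ ‖B ps.1‖ + L * ‖z k ω - ps.1‖ := by
    have h1 : ‖B (z k ω) - B ps.1‖ ≤ L * ‖z k ω - ps.1‖ := hBlip _ _
    have h2 : ‖B (z k ω)‖ ≤ ‖B (z k ω) - B ps.1‖ + ‖B ps.1‖ := by
      calc ‖B (z k ω)‖ = ‖(B (z k ω) - B ps.1) + B ps.1‖ := by rw [sub_add_cancel]
        _ ≤ ‖B (z k ω) - B ps.1‖ + ‖B ps.1‖ := norm_add_le _ _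
    linarith only [h1, h2]
  exact sps_arith hρk hρkb hL hN (sq_nonneg _) (norm_nonneg _) (norm_nonneg _)
    (norm_nonneg _) hsD hbb hv
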